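/- Let Q be a Dynkin quiver and e, d dimension vectors with d−e ≥ 0. The quiver Grassmannian Gr_e(M̃_d) of the rigid representation of dimension vector d is nonempty if and only if Ext¹_Q(M̃_e, M̃_{d−e}) = 0. -/

import Mathlib

/-!
STATEMENT 9: Let Q be a Dynkin quiver and e, d dimension vectors with d−e ≥ 0.
The quiver Grassmannian `Gr_e(M̃_d)` of the rigid representation of dimension
vector d is nonempty if and only if `Ext¹_Q(M̃_e, M̃_{d−e}) = 0`.

A quiver is Dynkin iff its Tits form is positive definite; rigidity and the
vanishing of `Ext¹` are expressed via surjectivity of the map `Φ` computing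
`Ext¹` (via the standard resolution over the path algebra).
-/

noncomputable section
open Matrix

variable {V A : Type}

/-- A complex representation of the quiver `(V, A, s, t)` of dimension vector `d`. -/
abbrev QRep (s t : A → V) (d : V → ℕ) : Type :=
  ∀ a : A, Matrix (Fin (d (t a))) (Fin (d (s a))) ℂ

/-- The quiver Grassmannian `Gr_e(M)`: families of subspaces `N i ⊆ ℂ^{d i}` of
dimension `e i` with `M_a (N (s a)) ⊆ N (t a)` for every arrow. -/
def SubRep (s t : A → V) {d : V → ℕ} (M : QRep s t d) (e : V → ℕ) : Type :=
  {N : ∀ i : V, Submodule ℂ (Fin (d i) → ℂ) //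
    (∀ i, Module.finrank ℂ (N i) = e i) ∧
    ∀ a : A, (N (s a)).map (M a).mulVecLin ≤ N (t a)}

/-- The map `Φ^M_N`, whose cokernel is `Ext¹_Q(N,M)`. -/
def PhiFun (s t : A → V) {e d : V → ℕ} (N : QRep s t e) (M : QRep s t d) :
    (∀ i : V, Matrix (Fin (d i)) (Fin (e i)) ℂ) →
      (∀ a : A, Matrix (Fin (d (t a))) (Fin (e (s a))) ℂ) :=
  fun f a => M a * f (s a) - f (t a) * N a

/-- `Ext¹_Q(N, M) = 0`, expressed as surjectivity of `Φ^M_N` (whose cokernel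
computes `Ext¹` via the standard resolution over the path algebra). -/
def ExtVanish (s t : A → V) {e d : V → ℕ} (N : QRep s t e) (M : QRep s t d) : Prop :=
  Function.Surjective (PhiFun s t N M)

/-- A representation is rigid if `Ext¹_Q(M, M) = 0`. -/
def Rigid (s t : A → V) {d : V → ℕ} (M : QRep s t d) : Prop :=
  ExtVanish s t M M

/-- The Euler form `⟨x,y⟩ = Σ_i x i * y i − Σ_a x (s a) * y (t a)` of the quiver. -/
def eulerForm [Fintype V] [Fintype A] (s t : A → V) (x y : V → ℤ) : ℤ :=
  (∑ i : V, x i * y i) - ∑ a : A, x (s a) * y (t a)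

/-- The quiver is Dynkin (disjoint union of simply-laced Dynkin diagrams), i.e. its
Tits form is positive definite. -/
def IsDynkin [Fintype V] [Fintype A] (s t : A → V) : Prop :=
  ∀ x : V → ℤ, x ≠ 0 → 0 < eulerForm s t x x

/-- Morphisms of representations `X → Y`, given by matrices `φ i` with
`Y_a φ_{s a} = φ_{t a} X_a`. -/
def RHom (s t : A → V) {dX dY : V → ℕ} (X : QRep s t dX) (Y : QRep s t dY) : Type :=
  {φ : ∀ i : V, Matrix (Fin (dY i)) (Fin (dX i)) ℂ //
    ∀ a : A, Y a * φ (s a) = φ (t a) * X a}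

section Aux
variable [Fintype V] [Fintype A] (s t : A → V)

/-- `PhiFun` as a linear map. -/
def philin {e d : V → ℕ} (N : QRep s t e) (M : QRep s t d) :
    (∀ i : V, Matrix (Fin (d i)) (Fin (e i)) ℂ) →ₗ[ℂ]
      (∀ a : A, Matrix (Fin (d (t a))) (Fin (e (s a))) ℂ) where
  toFun := PhiFun s t N M
  map_add' f g := by
    funext a
    simp only [PhiFun, Pi.add_apply, Matrix.mul_add, Matrix.add_mul]
    abel
  map_smul' c f := by
    funext a
    simp only [PhiFun, Pi.smul_apply, Matrix.mul_smul, Matrix.smul_mul, RingHom.id_apply,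
      smul_sub]

@[simp] theorem philin_apply {e d : V → ℕ} (N : QRep s t e) (M : QRep s t d) (f) :
    philin s t N M f = PhiFun s t N M f := rfl

/-- Isomorphism of representations. -/
def IsoRep {dd : V → ℕ} (X X' : QRep s t dd) : Prop :=
  ∃ g : ∀ i, Matrix (Fin (dd i)) (Fin (dd i)) ℂ,
    (∀ i, IsUnit (g i)) ∧ ∀ a, g (t a) * X a = X' a * g (s a)

theorem isoRep_refl {dd : V → ℕ} (X : QRep s t dd) : IsoRep s t X X :=
  ⟨fun _ => 1, fun _ => isUnit_one, fun a => by simp⟩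

theorem IsoRep.symm {dd : V → ℕ} {X X' : QRep s t dd} (h : IsoRep s t X X') :
    IsoRep s t X' X := by
  obtain ⟨g, hg, hrel⟩ := h
  have hdet : ∀ i, IsUnit (g i).det := fun i => (Matrix.isUnit_iff_isUnit_det _).1 (hg i)
  refine ⟨fun i => (g i)⁻¹, fun i => Matrix.isUnit_nonsing_inv_iff.2 (hg i), fun a => ?_⟩
  have hX : X' a * g (s a) * (g (s a))⁻¹ = X' a :=
    Matrix.mul_nonsing_inv_cancel_right _ _ (hdet _)
  conv_lhs => rw [← hX, ← hrel a]
  rw [Matrix.mul_assoc (g (t a)), Matrix.nonsing_inv_mul_cancel_left _ _ (hdet _)]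

theorem IsoRep.trans {dd : V → ℕ} {X X' X'' : QRep s t dd} (h : IsoRep s t X X')
    (h' : IsoRep s t X' X'') : IsoRep s t X X'' := by
  obtain ⟨g, hg, hrel⟩ := h
  obtain ⟨g', hg', hrel'⟩ := h'
  refine ⟨fun i => g' i * g i, fun i => (hg' i).mul (hg i), fun a => ?_⟩
  rw [Matrix.mul_assoc, hrel, ← Matrix.mul_assoc, hrel', Matrix.mul_assoc]

/-- Surjectivity of `Φ` transfers along isomorphisms. -/
theorem surj_transfer {e' d' : V → ℕ} {N N' : QRep s t e'} {M M' : QRep s t d'}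
    (hN : IsoRep s t N N') (hM : IsoRep s t M M')
    (h : Function.Surjective (PhiFun s t N M)) :
    Function.Surjective (PhiFun s t N' M') := by
  obtain ⟨gN, hgN, relN⟩ := hN
  obtain ⟨gM, hgM, relM⟩ := hM
  have hdN : ∀ i, IsUnit (gN i).det := fun i => (Matrix.isUnit_iff_isUnit_det _).1 (hgN i)
  have hdM : ∀ i, IsUnit (gM i).det := fun i => (Matrix.isUnit_iff_isUnit_det _).1 (hgM i)
  intro y
  obtain ⟨f, hf⟩ := h (fun a => (gM (t a))⁻¹ * y a * gN (s a))
  refine ⟨fun i => gM i * f i * (gN i)⁻¹, ?_⟩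
  funext a
  have hfa := congrFun hf a
  simp only [PhiFun] at hfa ⊢
  have e1 : M' a * (gM (s a) * f (s a) * (gN (s a))⁻¹)
      = gM (t a) * (M a * f (s a)) * (gN (s a))⁻¹ := by
    rw [← Matrix.mul_assoc, ← Matrix.mul_assoc, ← relM, Matrix.mul_assoc (gM (t a))]
  have h2 : (gN (t a))⁻¹ * N' a = N a * (gN (s a))⁻¹ := by
    have h3 : N' a * gN (s a) * (gN (s a))⁻¹ = N' a :=
      Matrix.mul_nonsing_inv_cancel_right _ _ (hdN _)
    conv_lhs => rw [← h3, ← relN a]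
    rw [Matrix.mul_assoc (gN (t a)), Matrix.nonsing_inv_mul_cancel_left _ _ (hdN _)]
  have e2 : (gM (t a) * f (t a) * (gN (t a))⁻¹) * N' a
      = gM (t a) * (f (t a) * N a) * (gN (s a))⁻¹ := by
    rw [Matrix.mul_assoc (gM (t a) * f (t a)), h2, ← Matrix.mul_assoc,
      Matrix.mul_assoc (gM (t a))]
  rw [e1, e2, ← Matrix.sub_mul, ← Matrix.mul_sub, hfa, ← Matrix.mul_assoc,
    Matrix.mul_nonsing_inv_cancel_left _ _ (hdM _), Matrix.mul_assoc,
    Matrix.mul_nonsing_inv _ (hdN _), Matrix.mul_one]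


/-- Transport of a subrepresentation along an isomorphism. -/
theorem subRep_transfer {dd e' : V → ℕ} {X X' : QRep s t dd}
    (h : IsoRep s t X X') (hS : Nonempty (SubRep s t X e')) :
    Nonempty (SubRep s t X' e') := by
  obtain ⟨g, hg, hrel⟩ := h
  have hdet : ∀ i, IsUnit (g i).det := fun i => (Matrix.isUnit_iff_isUnit_det _).1 (hg i)
  obtain ⟨⟨N, hrk, hinv⟩⟩ := hS
  -- the linear equivalence given by `g i`
  let E : ∀ i, (Fin (dd i) → ℂ) ≃ₗ[ℂ] (Fin (dd i) → ℂ) := fun i =>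
    { (g i).mulVecLin with
      invFun := ((g i)⁻¹).mulVecLin
      left_inv := fun v => by
        simp only [LinearMap.toFun_eq_coe, Matrix.mulVecLin_apply, Matrix.mulVec_mulVec,
          Matrix.nonsing_inv_mul _ (hdet i), Matrix.one_mulVec]
      right_inv := fun v => by
        simp only [LinearMap.toFun_eq_coe, Matrix.mulVecLin_apply, Matrix.mulVec_mulVec,
          Matrix.mul_nonsing_inv _ (hdet i), Matrix.one_mulVec] }
  have hE : ∀ i, (E i : (Fin (dd i) → ℂ) →ₗ[ℂ] (Fin (dd i) → ℂ)) = (g i).mulVecLin :=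
    fun i => rfl
  refine ⟨⟨fun i => (N i).map (g i).mulVecLin, fun i => ?_, fun a => ?_⟩⟩
  · show Module.finrank ℂ ((N i).map (g i).mulVecLin) = e' i
    rw [← hE i, LinearEquiv.finrank_map_eq]
    exact hrk i
  · have comp1 : (X' a).mulVecLin ∘ₗ (g (s a)).mulVecLin = (X' a * g (s a)).mulVecLin :=
      (Matrix.mulVecLin_mul _ _).symm
    have comp2 : (g (t a)).mulVecLin ∘ₗ (X a).mulVecLin = (g (t a) * X a).mulVecLin :=
      (Matrix.mulVecLin_mul _ _).symm
    rw [← Submodule.map_comp, comp1, ← hrel a, ← comp2, Submodule.map_comp]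
    exact Submodule.map_mono (hinv a)

/-- Along an affine line of pairs of representations, surjectivity of `Φ` fails for at
most finitely many parameters, provided it holds at the base point. -/
theorem poly_surj {e' d' : V → ℕ} (N₀ N₁ : QRep s t e') (M₀ M₁ : QRep s t d')
    (h₀ : Function.Surjective (PhiFun s t N₀ M₀)) :
    ∃ Z : Set ℂ, Z.Finite ∧ (0 : ℂ) ∉ Z ∧ ∀ z ∉ Z,
      Function.Surjective (PhiFun s t
        (fun a => N₀ a + z • (N₁ a - N₀ a)) (fun a => M₀ a + z • (M₁ a - M₀ a))) := by
  classical
  obtain ⟨σ, hσ⟩ := (philin s t N₀ M₀).exists_rightInverse_of_surjective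
    (LinearMap.range_eq_top.2 h₀)
  let bT : Module.Basis (Σ a : A, Fin (d' (t a)) × Fin (e' (s a))) ℂ
      (∀ a : A, Matrix (Fin (d' (t a))) (Fin (e' (s a))) ℂ) :=
    Pi.basis fun a => Matrix.stdBasis ℂ _ _
  let A0 : Matrix _ _ ℂ := LinearMap.toMatrix bT bT ((philin s t N₀ M₀).comp σ)
  let A1 : Matrix _ _ ℂ := LinearMap.toMatrix bT bT
    ((philin s t (fun a => N₁ a - N₀ a) (fun a => M₁ a - M₀ a)).comp σ)
  have hA0 : A0 = 1 := by
    rw [show A0 = LinearMap.toMatrix bT bT ((philin s t N₀ M₀).comp σ) from rfl, hσ]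
    exact LinearMap.toMatrix_id bT
  let Pm : Matrix _ _ (Polynomial ℂ) :=
    Matrix.of fun i j => Polynomial.C (A0 i j) + Polynomial.X * Polynomial.C (A1 i j)
  have evalP : ∀ z : ℂ, (Pm.det).eval z = (A0 + z • A1).det := by
    intro z
    have hmap : Pm.map (Polynomial.evalRingHom z) = A0 + z • A1 := by
      ext i j
      rw [Matrix.map_apply]
      show Polynomial.eval z (Polynomial.C (A0 i j) + Polynomial.X * Polynomial.C (A1 i j)) = _
      rw [Matrix.add_apply, Matrix.smul_apply, smul_eq_mul, Polynomial.eval_add,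
        Polynomial.eval_C, Polynomial.eval_mul, Polynomial.eval_X, Polynomial.eval_C]
    calc (Pm.det).eval z = (Polynomial.evalRingHom z) Pm.det := rfl
      _ = (Pm.map (Polynomial.evalRingHom z)).det := RingHom.map_det _ _
      _ = (A0 + z • A1).det := by rw [hmap]
  have hP0 : (Pm.det).eval 0 = 1 := by
    rw [evalP 0, zero_smul, add_zero, hA0, Matrix.det_one]
  have hPne : Pm.det ≠ 0 := fun h => by simp [h] at hP0
  refine ⟨{z | (Pm.det).eval z = 0}, Polynomial.finite_setOf_isRoot hPne, by
    simp [hP0], ?_⟩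
  intro z hz
  have hdet : IsUnit ((A0 + z • A1).det) := by
    rw [← evalP z]
    exact isUnit_iff_ne_zero.2 hz
  have hphi : philin s t (fun a => N₀ a + z • (N₁ a - N₀ a)) (fun a => M₀ a + z • (M₁ a - M₀ a))
      = philin s t N₀ M₀ + z • philin s t (fun a => N₁ a - N₀ a) (fun a => M₁ a - M₀ a) := by
    refine LinearMap.ext fun f => ?_
    funext a
    simp only [philin_apply, PhiFun, LinearMap.add_apply, LinearMap.smul_apply, Pi.add_apply,
      Pi.smul_apply, Matrix.add_mul, Matrix.mul_add, Matrix.smul_mul, Matrix.mul_smul, smul_sub,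
      Matrix.sub_mul, Matrix.mul_sub]
    module
  have hmat : LinearMap.toMatrix bT bT
      ((philin s t (fun a => N₀ a + z • (N₁ a - N₀ a))
        (fun a => M₀ a + z • (M₁ a - M₀ a))).comp σ) = A0 + z • A1 := by
    rw [hphi, LinearMap.add_comp, LinearMap.smul_comp, map_add, _root_.map_smul]
  intro y
  have hrec : Matrix.toLin bT bT (A0 + z • A1)
      = (philin s t (fun a => N₀ a + z • (N₁ a - N₀ a))
          (fun a => M₀ a + z • (M₁ a - M₀ a))).comp σ := by
    rw [← hmat, Matrix.toLin_toMatrix]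
  refine ⟨σ (Matrix.toLin bT bT (A0 + z • A1)⁻¹ y), ?_⟩
  have := congrFun (congrArg (fun (L : _ →ₗ[ℂ] _) => ⇑L) hrec) (Matrix.toLin bT bT (A0 + z • A1)⁻¹ y)
  rw [← philin_apply]
  calc philin s t _ _ (σ (Matrix.toLin bT bT (A0 + z • A1)⁻¹ y))
      = Matrix.toLin bT bT (A0 + z • A1) (Matrix.toLin bT bT (A0 + z • A1)⁻¹ y) := this.symm
    _ = Matrix.toLin bT bT ((A0 + z • A1) * (A0 + z • A1)⁻¹) y := by
        rw [Matrix.toLin_mul bT bT bT]; rfl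
    _ = y := by rw [Matrix.mul_nonsing_inv _ hdet, Matrix.toLin_one, LinearMap.id_apply]

end Aux

section Calc

attribute [local instance] Matrix.normedAddCommGroup Matrix.normedSpace

/-- Matrix multiplication is a bounded bilinear map (entrywise sup norm). -/
theorem isBBM_matmul {m n k : Type} [Fintype m] [Fintype n] [Fintype k] :
    IsBoundedBilinearMap ℂ (fun p : Matrix m n ℂ × Matrix n k ℂ => p.1 * p.2) := by
  refine ⟨fun x₁ x₂ y => Matrix.add_mul _ _ _, fun c x y => Matrix.smul_mul c x y,
    fun x y₁ y₂ => Matrix.mul_add _ _ _, fun c x y => Matrix.mul_smul x c y,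
    ⟨(Fintype.card n : ℝ) + 1, by positivity, fun x y => ?_⟩⟩
  rw [Matrix.norm_le_iff (by positivity)]
  intro i j
  rw [Matrix.mul_apply]
  calc ‖∑ l, x i l * y l j‖ ≤ ∑ l, ‖x i l * y l j‖ := norm_sum_le _ _
    _ ≤ ∑ _l : n, ‖x‖ * ‖y‖ := Finset.sum_le_sum fun l _ => by
        rw [norm_mul]
        exact mul_le_mul (Matrix.norm_entry_le_entrywise_sup_norm x)
          (Matrix.norm_entry_le_entrywise_sup_norm y) (norm_nonneg _) (norm_nonneg _)
    _ = (Fintype.card n : ℝ) * (‖x‖ * ‖y‖) := by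
        rw [Finset.sum_const, Finset.card_univ, nsmul_eq_mul]
    _ ≤ ((Fintype.card n : ℝ) + 1) * ‖x‖ * ‖y‖ := by
        rw [mul_assoc]
        have h1 := mul_nonneg (norm_nonneg x) (norm_nonneg y)
        nlinarith [Fintype.card n]

/-- Left multiplication by a fixed matrix, as a continuous linear map. -/
def matLeft {m n k : Type} [Fintype m] [Fintype n] [Fintype k] (K : Matrix m n ℂ) :
    Matrix n k ℂ →L[ℂ] Matrix m k ℂ :=
  LinearMap.toContinuousLinearMap
    { toFun := fun B => K * B
      map_add' := fun B C => Matrix.mul_add _ _ _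
      map_smul' := fun c B => Matrix.mul_smul _ _ _ }

@[simp] theorem matLeft_apply {m n k : Type} [Fintype m] [Fintype n] [Fintype k]
    (K : Matrix m n ℂ) (B : Matrix n k ℂ) : matLeft K B = K * B := rfl

/-- Right multiplication by a fixed matrix, as a continuous linear map. -/
def matRight {m n k : Type} [Fintype m] [Fintype n] [Fintype k] (K : Matrix n k ℂ) :
    Matrix m n ℂ →L[ℂ] Matrix m k ℂ :=
  LinearMap.toContinuousLinearMap
    { toFun := fun B => B * K
      map_add' := fun B C => Matrix.add_mul _ _ _
      map_smul' := fun c B => Matrix.smul_mul _ _ _ }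

@[simp] theorem matRight_apply {m n k : Type} [Fintype m] [Fintype n] [Fintype k]
    (K : Matrix n k ℂ) (B : Matrix m n ℂ) : matRight K B = B * K := rfl

theorem HasStrictFDerivAt.matmul {G : Type*} [NormedAddCommGroup G] [NormedSpace ℂ G]
    {m n k : Type} [Fintype m] [Fintype n] [Fintype k]
    {f : G → Matrix m n ℂ} {g : G → Matrix n k ℂ} {f' : G →L[ℂ] Matrix m n ℂ}
    {g' : G →L[ℂ] Matrix n k ℂ} {x : G}
    (hf : HasStrictFDerivAt f f' x) (hg : HasStrictFDerivAt g g' x) :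
    HasStrictFDerivAt (fun y => f y * g y)
      ((matLeft (f x)).comp g' + (matRight (g x)).comp f') x := by
  have h := ((isBBM_matmul (m := m) (n := n) (k := k)).hasStrictFDerivAt (f x, g x)).comp x (hf.prodMk hg)
  have heq : ((isBBM_matmul (m := m) (n := n) (k := k)).deriv (f x, g x)).comp (f'.prod g')
      = (matLeft (f x)).comp g' + (matRight (g x)).comp f' := by
    exact ContinuousLinearMap.ext fun v => rfl
  have h := h.congr_fderiv heq
  exact h

/-- The master perturbation lemma: if an equation `Eqf (p, X) = 0` holds at `(p₀, X₀)` and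
the partial derivative in `p` is surjective, then for all `X` near `X₀` the equation has a
solution `p` in any prescribed neighbourhood of `p₀`. -/
theorem master {P R T : Type*} [NormedAddCommGroup P] [NormedSpace ℂ P]
    [NormedAddCommGroup R] [NormedSpace ℂ R] [NormedAddCommGroup T] [NormedSpace ℂ T]
    [CompleteSpace P] [CompleteSpace R] [CompleteSpace T]
    {Eqf : P × R → T} {p₀ : P} {X₀ : R} {D : P × R →L[ℂ] T}
    (hEq : Eqf (p₀, X₀) = 0) (hD : HasStrictFDerivAt Eqf D (p₀, X₀))
    (hsurj : ∀ w : T, ∃ dp : P, D (dp, 0) = w) {Pset : Set P} (hP : Pset ∈ nhds p₀) :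
    ∀ᶠ X in nhds X₀, ∃ p ∈ Pset, Eqf (p, X) = 0 := by
  have hF : HasStrictFDerivAt (fun z : P × R => (Eqf z, z.2))
      (D.prod (ContinuousLinearMap.snd ℂ P R)) (p₀, X₀) :=
    hD.prodMk (ContinuousLinearMap.snd ℂ P R).hasStrictFDerivAt
  have htop : LinearMap.range (D.prod (ContinuousLinearMap.snd ℂ P R) : P × R →ₗ[ℂ] T × R) = ⊤ := by
    rw [LinearMap.range_eq_top]
    rintro ⟨w, r⟩
    obtain ⟨dp, hdp⟩ := hsurj (w - D (0, r))
    refine ⟨(dp, r), ?_⟩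
    have hsplit : ((dp, r) : P × R) = (dp, (0 : R)) + ((0 : P), r) := by simp
    have : D (dp, r) = w := by
      rw [hsplit, map_add, hdp]
      abel
    simp [ContinuousLinearMap.prod_apply, this]
  have hmap := hF.map_nhds_eq_of_surj htop
  have hS : (fun z : P × R => (Eqf z, z.2)) '' (Pset ×ˢ Set.univ) ∈ nhds ((0 : T), X₀) := by
    have h1 : (fun z : P × R => (Eqf z, z.2)) '' (Pset ×ˢ Set.univ) ∈
        Filter.map (fun z : P × R => (Eqf z, z.2)) (nhds (p₀, X₀)) :=
      Filter.image_mem_map (prod_mem_nhds hP Filter.univ_mem)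
    rw [hmap] at h1
    simpa [hEq] using h1
  rcases mem_nhds_prod_iff.mp hS with ⟨U, hU, W, hW, hUW⟩
  filter_upwards [hW] with X hX
  have hmem : ((0 : T), X) ∈ (fun z : P × R => (Eqf z, z.2)) '' (Pset ×ˢ Set.univ) :=
    hUW ⟨mem_of_mem_nhds hU, hX⟩
  obtain ⟨⟨p, X'⟩, hmemP, heq⟩ := hmem
  obtain ⟨h1, h2⟩ := Prod.mk.injEq _ _ _ _ ▸ heq
  subst h2
  exact ⟨p, hmemP.1, h1⟩

end Calc

section Orb

attribute [local instance] Matrix.normedAddCommGroup Matrix.normedSpace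

variable [Fintype V] [Fintype A] (s t : A → V)

/-- Every representation sufficiently близко to a rigid representation is isomorphic to it. -/
theorem orb1 {d : V → ℕ} {M : QRep s t d} (hM : Rigid s t M) :
    ∀ᶠ X in nhds M, IsoRep s t X M := by
  classical
  let PU : ∀ i : V, ((∀ i : V, Matrix (Fin (d i)) (Fin (d i)) ℂ) × QRep s t d) →L[ℂ] Matrix (Fin (d i)) (Fin (d i)) ℂ := fun i =>
    (ContinuousLinearMap.proj i).comp (ContinuousLinearMap.fst ℂ (∀ i : V, Matrix (Fin (d i)) (Fin (d i)) ℂ) (QRep s t d))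
  let PX : ∀ a : A, ((∀ i : V, Matrix (Fin (d i)) (Fin (d i)) ℂ) × QRep s t d) →L[ℂ] Matrix (Fin (d (t a))) (Fin (d (s a))) ℂ := fun a =>
    (ContinuousLinearMap.proj a).comp (ContinuousLinearMap.snd ℂ (∀ i : V, Matrix (Fin (d i)) (Fin (d i)) ℂ) (QRep s t d))
  let D1 : ((∀ i : V, Matrix (Fin (d i)) (Fin (d i)) ℂ) × QRep s t d) →L[ℂ] QRep s t d :=
    ContinuousLinearMap.pi fun a =>
      (matLeft (M a)).comp (PU (s a)) -
        ((matLeft ((1 : Matrix (Fin (d (t a))) (Fin (d (t a))) ℂ))).comp (PX a) +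
          (matRight (M a)).comp (PU (t a)))
  have hEq : (fun p : (∀ i : V, Matrix (Fin (d i)) (Fin (d i)) ℂ) × QRep s t d =>
      (fun a => M a * (1 + p.1 (s a)) - (1 + p.1 (t a)) * p.2 a : QRep s t d))
        (0, M) = 0 := by
    funext a
    simp
  have hD : HasStrictFDerivAt (fun p : (∀ i : V, Matrix (Fin (d i)) (Fin (d i)) ℂ) × QRep s t d =>
      (fun a => M a * (1 + p.1 (s a)) - (1 + p.1 (t a)) * p.2 a : QRep s t d)) D1
      (0, M) := by
    refine hasStrictFDerivAt_pi'' fun a => ?_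
    have h1 : HasStrictFDerivAt (fun p : (∀ i : V, Matrix (Fin (d i)) (Fin (d i)) ℂ) × QRep s t d => (1 : Matrix (Fin (d (s a))) (Fin (d (s a))) ℂ) + p.1 (s a))
        (PU (s a)) (0, M) := (PU (s a)).hasStrictFDerivAt.const_add 1
    have hL : HasStrictFDerivAt (fun p : (∀ i : V, Matrix (Fin (d i)) (Fin (d i)) ℂ) × QRep s t d => M a * ((1 : Matrix (Fin (d (s a))) (Fin (d (s a))) ℂ) + p.1 (s a)))
        ((matLeft (M a)).comp (PU (s a))) (0, M) :=
      (matLeft (M a)).hasStrictFDerivAt.comp _ h1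
    have h2 : HasStrictFDerivAt (fun p : (∀ i : V, Matrix (Fin (d i)) (Fin (d i)) ℂ) × QRep s t d => (1 : Matrix (Fin (d (t a))) (Fin (d (t a))) ℂ) + p.1 (t a))
        (PU (t a)) (0, M) := (PU (t a)).hasStrictFDerivAt.const_add 1
    have h2' : HasStrictFDerivAt (fun p : (∀ i : V, Matrix (Fin (d i)) (Fin (d i)) ℂ) × QRep s t d => p.2 a) (PX a) (0, M) :=
      (PX a).hasStrictFDerivAt
    have h5 := hL.sub (h2.matmul h2')
    exact h5.congr_fderiv (by
      refine ContinuousLinearMap.ext fun v => ?_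
      simp [D1, PU, PX, ContinuousLinearMap.proj_pi]
      rfl)
  have hsurj : ∀ w : QRep s t d, ∃ v : ∀ i : V, Matrix (Fin (d i)) (Fin (d i)) ℂ,
      D1 (v, 0) = w := by
    intro w
    obtain ⟨v, hv⟩ := hM w
    refine ⟨v, ?_⟩
    funext a
    have hva := congrFun hv a
    simp only [PhiFun] at hva
    have hred : D1 (v, 0) a = M a * v (s a) - v (t a) * M a := by
      simp [D1, PU, PX, ContinuousLinearMap.proj_pi]
    rw [hred, hva]
  have hP : {u : ∀ i : V, Matrix (Fin (d i)) (Fin (d i)) ℂ |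
      ∀ i, IsUnit ((1 : Matrix (Fin (d i)) (Fin (d i)) ℂ) + u i)} ∈
        nhds (0 : ∀ i : V, Matrix (Fin (d i)) (Fin (d i)) ℂ) := by
    have hopen : IsOpen {u : ∀ i : V, Matrix (Fin (d i)) (Fin (d i)) ℂ |
        ∀ i, IsUnit ((1 : Matrix (Fin (d i)) (Fin (d i)) ℂ) + u i)} := by
      have hrw : {u : ∀ i : V, Matrix (Fin (d i)) (Fin (d i)) ℂ |
          ∀ i, IsUnit ((1 : Matrix (Fin (d i)) (Fin (d i)) ℂ) + u i)}
          = ⋂ i : V, (fun u : ∀ i : V, Matrix (Fin (d i)) (Fin (d i)) ℂ =>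
              ((1 : Matrix (Fin (d i)) (Fin (d i)) ℂ) + u i).det) ⁻¹' {(0:ℂ)}ᶜ := by
        ext u
        simp [Matrix.isUnit_iff_isUnit_det, isUnit_iff_ne_zero]
      rw [hrw]
      refine isOpen_iInter_of_finite fun i => ?_
      exact IsOpen.preimage ((continuous_const.add (continuous_apply i)).matrix_det)
        isOpen_compl_singleton
    exact hopen.mem_nhds (by simp)
  have hmaster := master hEq hD hsurj hP
  filter_upwards [hmaster] with X hX
  obtain ⟨u, hu, hEq0⟩ := hX
  refine ⟨fun i => 1 + u i, hu, fun a => ?_⟩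
  have h0 := congrFun hEq0 a
  simp only [Pi.zero_apply] at h0
  rw [sub_eq_zero] at h0
  show (1 + u (t a)) * X a = M a * (1 + u (s a))
  exact h0.symm


/-- Uniqueness of rigid representations with a given dimension vector. -/
theorem rigid_unique {d : V → ℕ} {M M' : QRep s t d} (hM : Rigid s t M) (hM' : Rigid s t M') :
    IsoRep s t M' M := by
  classical
  set ℓ : ℂ → QRep s t d := fun z => (fun a => M a + z • (M' a - M a)) with hℓdef
  obtain ⟨Z₁, hZ₁fin, hZ₁0, hZ₁⟩ := poly_surj s t M M' M M' hM
  obtain ⟨Z₂, hZ₂fin, hZ₂0, hZ₂⟩ := poly_surj s t M' M M' M hM'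
  have hflip : ∀ z : ℂ, (fun a => M' a + (1 - z) • (M a - M' a)) = ℓ z := by
    intro z
    funext a
    show M' a + (1 - z) • (M a - M' a) = M a + z • (M' a - M a)
    module
  set S : Set ℂ := Z₁ ∩ {z | (1 - z) ∈ Z₂} with hSdef
  have hSfin : S.Finite := hZ₁fin.inter_of_left _
  have hrigid : ∀ z ∉ S, Rigid s t (ℓ z) := by
    intro z hz
    by_cases h1 : z ∈ Z₁
    · have h2 : (1 - z) ∉ Z₂ := fun hc => hz ⟨h1, hc⟩
      have := hZ₂ _ h2
      rw [hflip z] at this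
      exact this
    · exact hZ₁ _ h1
  have hℓcont : Continuous ℓ :=
    continuous_pi fun a => continuous_const.add (continuous_id.smul continuous_const)
  have hℓ0 : ℓ 0 = M := by funext a; simp [hℓdef]
  have hℓ1 : ℓ 1 = M' := by funext a; simp [hℓdef]
  have hO : IsOpen Sᶜ := hSfin.isClosed.isOpen_compl
  have hUopen : IsOpen (Sᶜ ∩ {z | IsoRep s t (ℓ z) M}) := by
    rw [isOpen_iff_mem_nhds]
    rintro z₀ ⟨hzO, hzU⟩
    refine Filter.mem_of_superset (Filter.inter_mem (hO.mem_nhds hzO)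
      ((hℓcont.tendsto z₀).eventually (orb1 s t (hrigid _ hzO)))) ?_
    rintro z ⟨hzO', hziso⟩
    exact ⟨hzO', IsoRep.trans s t (show IsoRep s t (ℓ z) (ℓ z₀) from hziso) (show IsoRep s t (ℓ z₀) M from hzU)⟩
  have hVopen : IsOpen (Sᶜ ∩ {z | IsoRep s t (ℓ z) M}ᶜ) := by
    rw [isOpen_iff_mem_nhds]
    rintro z₀ ⟨hzO, hzV⟩
    refine Filter.mem_of_superset (Filter.inter_mem (hO.mem_nhds hzO)
      ((hℓcont.tendsto z₀).eventually (orb1 s t (hrigid _ hzO)))) ?_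
    rintro z ⟨hzO', hziso⟩
    refine ⟨hzO', fun hzU => hzV ?_⟩
    exact IsoRep.trans s t (IsoRep.symm s t (show IsoRep s t (ℓ z) (ℓ z₀) from hziso)) hzU
  have hOconn : IsPreconnected (Sᶜ : Set ℂ) := by
    have h2 : (1 : Cardinal) < Module.rank ℝ ℂ := by
      rw [Complex.rank_real_complex]
      norm_num
    exact (hSfin.countable.isPathConnected_compl_of_one_lt_rank h2).isConnected.isPreconnected
  have h0O : (0 : ℂ) ∈ Sᶜ := fun hc => hZ₁0 hc.1
  have h1O : (1 : ℂ) ∈ Sᶜ := fun hc => by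
    have := hc.2
    simp only [Set.mem_setOf_eq, sub_self] at this
    exact hZ₂0 this
  have h0U : (0 : ℂ) ∈ {z | IsoRep s t (ℓ z) M} := by
    show IsoRep s t (ℓ 0) M
    rw [hℓ0]
    exact isoRep_refl s t M
  by_contra h1U
  have hcover : (Sᶜ : Set ℂ) ⊆ (Sᶜ ∩ {z | IsoRep s t (ℓ z) M}) ∪ (Sᶜ ∩ {z | IsoRep s t (ℓ z) M}ᶜ) := by
    intro z hz
    by_cases h : z ∈ {z | IsoRep s t (ℓ z) M}
    · exact Or.inl ⟨hz, h⟩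
    · exact Or.inr ⟨hz, h⟩
  obtain ⟨z, hz⟩ := hOconn _ _ hUopen hVopen hcover ⟨0, h0O, h0O, h0U⟩
    ⟨1, h1O, h1O, fun hc => h1U (by rw [← hℓ1]; exact hc)⟩
  exact hz.2.2.2 hz.2.1.2

end Orb

section Blocks

attribute [local instance] Matrix.normedAddCommGroup Matrix.normedSpace

variable [Fintype V] [Fintype A] (s t : A → V)
variable {d e : V → ℕ}

/-- Identification `Fin (e i) ⊕ Fin (d i - e i) ≃ Fin (d i)`. -/
def sigEq (hle : ∀ i, e i ≤ d i) (i : V) : Fin (e i) ⊕ Fin (d i - e i) ≃ Fin (d i) :=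
  finSumFinEquiv.trans (finCongr (by have := hle i; omega))

/-- The block-diagonal representation `Me ⊕ Mde`. -/
def Yrep (hle : ∀ i, e i ≤ d i) (Me : QRep s t e) (Mde : QRep s t fun i => d i - e i) :
    QRep s t d :=
  fun a => (Matrix.fromBlocks (Me a) 0 0 (Mde a)).submatrix
    (sigEq hle (t a)).symm (sigEq hle (s a)).symm

/-- The block decomposition of a representation. -/
def blk (hle : ∀ i, e i ≤ d i) (X : QRep s t d) (a : A) :
    Matrix (Fin (e (t a)) ⊕ Fin (d (t a) - e (t a)))
      (Fin (e (s a)) ⊕ Fin (d (s a) - e (s a))) ℂ :=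
  (X a).submatrix (sigEq hle (t a)) (sigEq hle (s a))

theorem blk_Yrep (hle : ∀ i, e i ≤ d i) (Me : QRep s t e)
    (Mde : QRep s t fun i => d i - e i) (a : A) :
    blk s t hle (Yrep s t hle Me Mde) a = Matrix.fromBlocks (Me a) 0 0 (Mde a) := by
  unfold blk Yrep
  rw [Matrix.submatrix_submatrix, Equiv.symm_comp_self, Equiv.symm_comp_self,
    Matrix.submatrix_id_id]

/-- Every representation sufficiently close to the block-diagonal representation
`Me ⊕ Mde` admits a subrepresentation of dimension vector `e`, provided
`Ext¹(Me, Mde) = 0`. -/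
theorem sub1 (hle : ∀ i, e i ≤ d i) {Me : QRep s t e} {Mde : QRep s t fun i => d i - e i}
    (hext : Function.Surjective (PhiFun s t Me Mde)) :
    ∀ᶠ X in nhds (Yrep s t hle Me Mde), Nonempty (SubRep s t X e) := by
  classical
  set Y := Yrep s t hle Me Mde with hYdef
  -- continuous linear projections
  let PH : ∀ i : V, ((∀ i : V, Matrix (Fin (d i - e i)) (Fin (e i)) ℂ) × QRep s t d) →L[ℂ]
      Matrix (Fin (d i - e i)) (Fin (e i)) ℂ := fun i =>
    (ContinuousLinearMap.proj i).comp
      (ContinuousLinearMap.fst ℂ (∀ i : V, Matrix (Fin (d i - e i)) (Fin (e i)) ℂ) (QRep s t d))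
  let B11 : ∀ a : A, ((∀ i : V, Matrix (Fin (d i - e i)) (Fin (e i)) ℂ) × QRep s t d) →L[ℂ]
      Matrix (Fin (e (t a))) (Fin (e (s a))) ℂ := fun a =>
    LinearMap.toContinuousLinearMap
      { toFun := fun p => (blk s t hle p.2 a).toBlocks₁₁
        map_add' := fun p q => by ext i j; rfl
        map_smul' := fun c p => by ext i j; rfl }
  let B12 : ∀ a : A, ((∀ i : V, Matrix (Fin (d i - e i)) (Fin (e i)) ℂ) × QRep s t d) →L[ℂ]
      Matrix (Fin (e (t a))) (Fin (d (s a) - e (s a))) ℂ := fun a =>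
    LinearMap.toContinuousLinearMap
      { toFun := fun p => (blk s t hle p.2 a).toBlocks₁₂
        map_add' := fun p q => by ext i j; rfl
        map_smul' := fun c p => by ext i j; rfl }
  let B21 : ∀ a : A, ((∀ i : V, Matrix (Fin (d i - e i)) (Fin (e i)) ℂ) × QRep s t d) →L[ℂ]
      Matrix (Fin (d (t a) - e (t a))) (Fin (e (s a))) ℂ := fun a =>
    LinearMap.toContinuousLinearMap
      { toFun := fun p => (blk s t hle p.2 a).toBlocks₂₁
        map_add' := fun p q => by ext i j; rfl
        map_smul' := fun c p => by ext i j; rfl }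
  let B22 : ∀ a : A, ((∀ i : V, Matrix (Fin (d i - e i)) (Fin (e i)) ℂ) × QRep s t d) →L[ℂ]
      Matrix (Fin (d (t a) - e (t a))) (Fin (d (s a) - e (s a))) ℂ := fun a =>
    LinearMap.toContinuousLinearMap
      { toFun := fun p => (blk s t hle p.2 a).toBlocks₂₂
        map_add' := fun p q => by ext i j; rfl
        map_smul' := fun c p => by ext i j; rfl }
  let D2 : ((∀ i : V, Matrix (Fin (d i - e i)) (Fin (e i)) ℂ) × QRep s t d) →L[ℂ]
      (∀ a : A, Matrix (Fin (d (t a) - e (t a))) (Fin (e (s a))) ℂ) :=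
    ContinuousLinearMap.pi fun a =>
      (matRight (Me a)).comp (PH (t a)) - (matLeft (Mde a)).comp (PH (s a)) - B21 a
  have hblkY : ∀ a, blk s t hle Y a = Matrix.fromBlocks (Me a) 0 0 (Mde a) :=
    blk_Yrep s t hle Me Mde
  have hEq : (fun p : (∀ i : V, Matrix (Fin (d i - e i)) (Fin (e i)) ℂ) × QRep s t d =>
      (fun a => p.1 (t a) * (blk s t hle p.2 a).toBlocks₁₁
        + p.1 (t a) * ((blk s t hle p.2 a).toBlocks₁₂ * p.1 (s a))
        - (blk s t hle p.2 a).toBlocks₂₁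
        - (blk s t hle p.2 a).toBlocks₂₂ * p.1 (s a) :
        ∀ a : A, Matrix (Fin (d (t a) - e (t a))) (Fin (e (s a))) ℂ)) (0, Y) = 0 := by
    funext a
    simp [hblkY a]
  have hD : HasStrictFDerivAt (fun p : (∀ i : V, Matrix (Fin (d i - e i)) (Fin (e i)) ℂ) × QRep s t d =>
      (fun a => p.1 (t a) * (blk s t hle p.2 a).toBlocks₁₁
        + p.1 (t a) * ((blk s t hle p.2 a).toBlocks₁₂ * p.1 (s a))
        - (blk s t hle p.2 a).toBlocks₂₁
        - (blk s t hle p.2 a).toBlocks₂₂ * p.1 (s a) :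
        ∀ a : A, Matrix (Fin (d (t a) - e (t a))) (Fin (e (s a))) ℂ)) D2 (0, Y) := by
    refine hasStrictFDerivAt_pi'' fun a => ?_
    have h1 := (PH (t a)).hasStrictFDerivAt (x := ((0, Y) :
      (∀ i : V, Matrix (Fin (d i - e i)) (Fin (e i)) ℂ) × QRep s t d)).matmul
      (B11 a).hasStrictFDerivAt
    have hinner := (B12 a).hasStrictFDerivAt (x := ((0, Y) :
      (∀ i : V, Matrix (Fin (d i - e i)) (Fin (e i)) ℂ) × QRep s t d)).matmul
      (PH (s a)).hasStrictFDerivAt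
    have h2 := (PH (t a)).hasStrictFDerivAt (x := ((0, Y) :
      (∀ i : V, Matrix (Fin (d i - e i)) (Fin (e i)) ℂ) × QRep s t d)).matmul hinner
    have h4 := (B22 a).hasStrictFDerivAt (x := ((0, Y) :
      (∀ i : V, Matrix (Fin (d i - e i)) (Fin (e i)) ℂ) × QRep s t d)).matmul
      (PH (s a)).hasStrictFDerivAt
    have h5 := (((h1.add h2).sub (B21 a).hasStrictFDerivAt).sub h4)
    refine h5.congr_fderiv ?_
    refine ContinuousLinearMap.ext fun v => ?_
    show PH (t a) (0, Y) * B11 a v + PH (t a) v * B11 a (0, Y)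
        + (PH (t a) (0, Y) * (B12 a (0, Y) * PH (s a) v + B12 a v * PH (s a) (0, Y))
          + PH (t a) v * (B12 a (0, Y) * PH (s a) (0, Y)))
        - B21 a v - (B22 a (0, Y) * PH (s a) v + B22 a v * PH (s a) (0, Y))
      = PH (t a) v * Me a - Mde a * PH (s a) v - B21 a v
    simp only [ContinuousLinearMap.coe_comp', Function.comp_apply,
      ContinuousLinearMap.add_apply, ContinuousLinearMap.sub_apply, matLeft_apply,
      matRight_apply, ContinuousLinearMap.proj_apply, ContinuousLinearMap.pi_apply,
      ContinuousLinearMap.coe_fst', ContinuousLinearMap.coe_snd',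
      LinearMap.coe_toContinuousLinearMap', LinearMap.coe_mk, AddHom.coe_mk,
      D2, PH, B11, B12, B21, B22, ContinuousLinearMap.proj_pi, Pi.zero_apply,
      Matrix.zero_mul, Matrix.mul_zero, zero_add, add_zero, hblkY,
      Matrix.toBlocks_fromBlocks₁₁, Matrix.toBlocks_fromBlocks₁₂,
      Matrix.toBlocks_fromBlocks₂₁, Matrix.toBlocks_fromBlocks₂₂]
    abel
  have hsurj : ∀ w : ∀ a : A, Matrix (Fin (d (t a) - e (t a))) (Fin (e (s a))) ℂ,
      ∃ v : ∀ i : V, Matrix (Fin (d i - e i)) (Fin (e i)) ℂ, D2 (v, 0) = w := by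
    intro w
    obtain ⟨v, hv⟩ := hext (fun a => - w a)
    refine ⟨v, ?_⟩
    funext a
    have hva := congrFun hv a
    simp only [PhiFun] at hva
    have hred : D2 (v, 0) a = v (t a) * Me a - Mde a * v (s a)
        - (blk s t hle (0 : QRep s t d) a).toBlocks₂₁ := by
      simp [D2, PH, B21, ContinuousLinearMap.proj_pi]
    have hz : (blk s t hle (0 : QRep s t d) a).toBlocks₂₁ = 0 := by
      ext i j; rfl
    rw [hred, hz, sub_zero]
    have : v (t a) * Me a - Mde a * v (s a) = -(Mde a * v (s a) - v (t a) * Me a) := by abel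
    rw [this, hva]
    simp
  have hmaster := master hEq hD hsurj (Filter.univ_mem (f := nhds
    (0 : ∀ i : V, Matrix (Fin (d i - e i)) (Fin (e i)) ℂ)))
  filter_upwards [hmaster] with X hX
  obtain ⟨h, -, hEq0⟩ := hX
  -- rearrange the equation
  have hrel : ∀ a, (blk s t hle X a).toBlocks₂₁ + (blk s t hle X a).toBlocks₂₂ * h (s a)
      = h (t a) * ((blk s t hle X a).toBlocks₁₁ + (blk s t hle X a).toBlocks₁₂ * h (s a)) := by
    intro a
    have h0 := congrFun hEq0 a
    simp only [Pi.zero_apply] at h0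
    rw [Matrix.mul_add]
    have : h (t a) * (blk s t hle X a).toBlocks₁₁
        + h (t a) * ((blk s t hle X a).toBlocks₁₂ * h (s a))
        - (blk s t hle X a).toBlocks₂₁ - (blk s t hle X a).toBlocks₂₂ * h (s a) = 0 := h0
    rw [← Matrix.mul_assoc] at this ⊢
    have h2 := sub_eq_zero.mp (by rw [sub_sub] at this; exact this)
    rw [← h2]
  -- the graph linear maps
  let G : ∀ i : V, (Fin (e i) → ℂ) →ₗ[ℂ] (Fin (d i) → ℂ) := fun i =>
    { toFun := fun v => fun j => Sum.elim v ((h i).mulVec v) ((sigEq hle i).symm j)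
      map_add' := fun v w => by
        funext j
        rcases hj : (sigEq hle i).symm j with k | k <;>
          simp [hj, Matrix.mulVec_add]
      map_smul' := fun c v => by
        funext j
        rcases hj : (sigEq hle i).symm j with k | k <;>
          simp [hj, Matrix.mulVec_smul] }
  have hGapp : ∀ i v c, G i v ((sigEq hle i) c) = Sum.elim v ((h i).mulVec v) c := by
    intro i v c
    show Sum.elim v ((h i).mulVec v) ((sigEq hle i).symm ((sigEq hle i) c)) = _
    rw [Equiv.symm_apply_apply]
  have hGinj : ∀ i, Function.Injective (G i) := by
    intro i v w hvw
    funext k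
    have h1 := congrFun hvw ((sigEq hle i) (Sum.inl k))
    rw [hGapp, hGapp] at h1
    simpa using h1
  refine ⟨⟨fun i => LinearMap.range (G i), fun i => ?_, fun a => ?_⟩⟩
  · rw [LinearMap.finrank_range_of_inj (hGinj i)]
    simp [Module.finrank_fin_fun]
  · rintro u hu
    rw [Submodule.mem_map] at hu
    obtain ⟨w, hw, rfl⟩ := hu
    obtain ⟨v, rfl⟩ := hw
    refine ⟨((blk s t hle X a).toBlocks₁₁ + (blk s t hle X a).toBlocks₁₂ * h (s a)).mulVec v, ?_⟩
    show G (t a) _ = (X a).mulVecLin (G (s a) v)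
    rw [Matrix.mulVecLin_apply]
    have hGs : (G (s a) v) ∘ (sigEq hle (s a)) = Sum.elim v ((h (s a)).mulVec v) := by
      funext c
      exact hGapp (s a) v c
    have hvec : ((G (s a) v ∘ (sigEq hle (s a))) ∘ (sigEq hle (s a)).symm) = G (s a) v := by
      funext j'
      simp
    have hfb : (blk s t hle X a).mulVec (Sum.elim v ((h (s a)).mulVec v))
        = Sum.elim
            ((blk s t hle X a).toBlocks₁₁.mulVec v
              + (blk s t hle X a).toBlocks₁₂.mulVec ((h (s a)).mulVec v))
            ((blk s t hle X a).toBlocks₂₁.mulVec v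
              + (blk s t hle X a).toBlocks₂₂.mulVec ((h (s a)).mulVec v)) := by
      conv_lhs => rw [← Matrix.fromBlocks_toBlocks (blk s t hle X a)]
      rw [Matrix.fromBlocks_mulVec]
      simp [Sum.elim_comp_inl, Sum.elim_comp_inr]
    have hXc : ∀ c, ((X a).mulVec (G (s a) v)) ((sigEq hle (t a)) c)
        = ((blk s t hle X a).mulVec (Sum.elim v ((h (s a)).mulVec v))) c := by
      intro c
      rw [← hGs]
      show _ = ((X a).submatrix (sigEq hle (t a)) (sigEq hle (s a))).mulVec _ c
      rw [Matrix.submatrix_mulVec_equiv, hvec]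
      rfl
    funext j
    have hj' : j = (sigEq hle (t a)) ((sigEq hle (t a)).symm j) :=
      (Equiv.apply_symm_apply _ _).symm
    rw [hj', hGapp, hXc, hfb]
    rcases (sigEq hle (t a)).symm j with k | k
    · show (((blk s t hle X a).toBlocks₁₁
          + (blk s t hle X a).toBlocks₁₂ * h (s a)).mulVec v) k = _
      rw [Matrix.add_mulVec, ← Matrix.mulVec_mulVec]
      rfl
    · show ((h (t a)).mulVec (((blk s t hle X a).toBlocks₁₁
          + (blk s t hle X a).toBlocks₁₂ * h (s a)).mulVec v)) k = _
      have hr := congrArg (fun (K : Matrix (Fin (d (t a) - e (t a))) (Fin (e (s a))) ℂ) =>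
        K.mulVec v) (hrel a)
      simp only [Matrix.add_mulVec, ← Matrix.mulVec_mulVec] at hr ⊢
      rw [← hr]
      rfl

end Blocks

section Assemble

attribute [local instance] Matrix.normedAddCommGroup Matrix.normedSpace

variable [Fintype V] [Fintype A] (s t : A → V) {d e : V → ℕ}

/-- In any neighbourhood of `1` in `ℂ` there is a point avoiding a given finite set. -/
theorem exists_near_one_notin {Z : Set ℂ} (hZ : Z.Finite) {U : Set ℂ} (hU : U ∈ nhds (1:ℂ)) :
    ∃ z : ℂ, z ∈ U ∧ z ∉ Z := by
  obtain ⟨δ, hδpos, hball⟩ := Metric.mem_nhds_iff.mp hU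
  have hinj : Function.Injective (fun n : ℕ => (1:ℂ) + ((δ/(n+2) : ℝ) : ℂ)) := by
    intro m n hmn
    simp only [add_right_inj, Complex.ofReal_inj] at hmn
    have hm : (0:ℝ) < (m:ℝ) + 2 := by positivity
    have hn : (0:ℝ) < (n:ℝ) + 2 := by positivity
    rw [div_eq_div_iff hm.ne' hn.ne'] at hmn
    have h3 : (m:ℝ) = (n:ℝ) := by
      have hδ : δ ≠ 0 := ne_of_gt hδpos
      nlinarith
    exact_mod_cast h3
  have hmem : ∀ n : ℕ, (1:ℂ) + ((δ/(n+2):ℝ):ℂ) ∈ Metric.ball (1:ℂ) δ := by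
    intro n
    have h1 : dist ((1:ℂ) + ((δ/(n+2):ℝ):ℂ)) 1 = ‖((δ/(n+2):ℝ):ℂ)‖ := by
      rw [dist_eq_norm]
      ring_nf
    rw [Metric.mem_ball, h1, Complex.norm_real, Real.norm_eq_abs]
    rw [abs_of_pos (by positivity), div_lt_iff₀ (by positivity)]
    nlinarith
  have hinf : (Metric.ball (1:ℂ) δ).Infinite :=
    Set.infinite_of_injective_forall_mem hinj hmem
  obtain ⟨z, hz⟩ := (hinf.diff hZ).nonempty
  exact ⟨z, hball hz.1, hz.2⟩

/-- Backward direction: `Ext¹(Me, Mde) = 0` implies `Gr_e(Md) ≠ ∅`. -/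
theorem backward_dir (hle : ∀ i, e i ≤ d i) {Md : QRep s t d} {Me : QRep s t e}
    {Mde : QRep s t fun i => d i - e i} (hMd : Rigid s t Md)
    (hext : Function.Surjective (PhiFun s t Me Mde)) :
    Nonempty (SubRep s t Md e) := by
  classical
  set Y := Yrep s t hle Me Mde with hY
  obtain ⟨Z, hZfin, hZ0, hZ⟩ := poly_surj s t Md Y Md Y hMd
  set ℓ : ℂ → QRep s t d := fun z => fun a => Md a + z • (Y a - Md a) with hℓ
  have hcont : Continuous ℓ :=
    continuous_pi fun a => continuous_const.add (continuous_id.smul continuous_const)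
  have hl1 : ℓ 1 = Y := by funext a; simp [hℓ]
  have hmem : ℓ ⁻¹' {X | Nonempty (SubRep s t X e)} ∈ nhds (1:ℂ) := by
    refine hcont.continuousAt.preimage_mem_nhds ?_
    rw [hl1]
    exact sub1 s t hle hext
  obtain ⟨z, hzU, hzZ⟩ := exists_near_one_notin hZfin hmem
  have hrig : Rigid s t (ℓ z) := hZ z hzZ
  have hsub : Nonempty (SubRep s t (ℓ z) e) := hzU
  have hiso : IsoRep s t (ℓ z) Md := rigid_unique s t hMd hrig
  exact subRep_transfer s t hiso hsub

/-- Forward construction: a subrepresentation of a rigid representation gives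
representations `Am`, `Cm` of dimensions `e`, `d - e` with `Ext¹(Am, Cm) = 0`. -/
theorem forward_AC (hle : ∀ i, e i ≤ d i) {Md : QRep s t d}
    (hMd : Rigid s t Md) (hS : Nonempty (SubRep s t Md e)) :
    ∃ (Am : QRep s t e) (Cm : QRep s t fun i => d i - e i),
      Function.Surjective (PhiFun s t Am Cm) := by
  classical
  obtain ⟨⟨N, hrk, hinv⟩⟩ := hS
  let v : ∀ i, Module.Basis (Fin (e i)) ℂ (N i) := fun i =>
    Module.finBasisOfFinrankEq ℂ (N i) (hrk i)
  let w : ∀ i, Module.Basis (Fin (d i - e i)) ℂ ((Fin (d i) → ℂ) ⧸ N i) := fun i =>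
    Module.finBasisOfFinrankEq ℂ _ (by
      have h1 := Submodule.finrank_quotient_add_finrank (N i)
      have h2 : Module.finrank ℂ (Fin (d i) → ℂ) = d i := by simp
      have h3 := hrk i
      omega)
  let ι : ∀ i, (Fin (e i) → ℂ) →ₗ[ℂ] (Fin (d i) → ℂ) := fun i =>
    (N i).subtype ∘ₗ ((v i).equivFun.symm : (Fin (e i) → ℂ) ≃ₗ[ℂ] N i).toLinearMap
  let π : ∀ i, (Fin (d i) → ℂ) →ₗ[ℂ] (Fin (d i - e i) → ℂ) := fun i =>
    ((w i).equivFun : _ ≃ₗ[ℂ] (Fin (d i - e i) → ℂ)).toLinearMap ∘ₗ (N i).mkQ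
  have hcom : ∀ a, N (s a) ≤ Submodule.comap (Md a).mulVecLin (N (t a)) := fun a =>
    Submodule.map_le_iff_le_comap.mp (hinv a)
  have hres : ∀ a, ∀ x ∈ N (s a), (Md a).mulVecLin x ∈ N (t a) := fun a x hx =>
    Submodule.mem_comap.mp (hcom a hx)
  let AL : ∀ a, (Fin (e (s a)) → ℂ) →ₗ[ℂ] (Fin (e (t a)) → ℂ) := fun a =>
    ((v (t a)).equivFun : _ ≃ₗ[ℂ] _).toLinearMap ∘ₗ
      ((Md a).mulVecLin.restrict (hres a)) ∘ₗ
        ((v (s a)).equivFun.symm : _ ≃ₗ[ℂ] _).toLinearMap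
  let CL : ∀ a, (Fin (d (s a) - e (s a)) → ℂ) →ₗ[ℂ] (Fin (d (t a) - e (t a)) → ℂ) := fun a =>
    ((w (t a)).equivFun : _ ≃ₗ[ℂ] _).toLinearMap ∘ₗ
      (Submodule.mapQ (N (s a)) (N (t a)) (Md a).mulVecLin (hcom a)) ∘ₗ
        ((w (s a)).equivFun.symm : _ ≃ₗ[ℂ] _).toLinearMap
  refine ⟨fun a => LinearMap.toMatrix' (AL a), fun a => LinearMap.toMatrix' (CL a), ?_⟩
  have hKA : ∀ a, ι (t a) ∘ₗ AL a = (Md a).mulVecLin ∘ₗ ι (s a) := by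
    intro a
    refine LinearMap.ext fun u => ?_
    show (N (t a)).subtype ((v (t a)).equivFun.symm ((v (t a)).equivFun
        (((Md a).mulVecLin.restrict (hres a)) ((v (s a)).equivFun.symm u))))
      = (Md a).mulVecLin ((N (s a)).subtype ((v (s a)).equivFun.symm u))
    rw [LinearEquiv.symm_apply_apply]
    rfl
  have hKC : ∀ a, CL a ∘ₗ π (s a) = π (t a) ∘ₗ (Md a).mulVecLin := by
    intro a
    refine LinearMap.ext fun x => ?_
    show (w (t a)).equivFun (Submodule.mapQ _ _ _ (hcom a) ((w (s a)).equivFun.symm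
        ((w (s a)).equivFun ((N (s a)).mkQ x))))
      = (w (t a)).equivFun ((N (t a)).mkQ ((Md a).mulVecLin x))
    rw [LinearEquiv.symm_apply_apply, Submodule.mkQ_apply, Submodule.mapQ_apply,
      Submodule.mkQ_apply]
  have hπsurj : ∀ i, Function.Surjective (π i) := by
    intro i
    have hc : ⇑(π i) = ⇑((w i).equivFun.toLinearMap) ∘ ⇑((N i).mkQ) := rfl
    rw [hc]
    exact Function.Surjective.comp ((w i).equivFun.surjective) (Submodule.mkQ_surjective _)
  have hιinj : ∀ i, Function.Injective (ι i) := by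
    intro i
    have hc : ⇑(ι i) = ⇑((N i).subtype) ∘ ⇑((v i).equivFun.symm.toLinearMap) := rfl
    rw [hc]
    exact Function.Injective.comp (Submodule.injective_subtype _) ((v i).equivFun.symm.injective)
  have hπR := fun i => (π i).exists_rightInverse_of_surjective
    (LinearMap.range_eq_top.2 (hπsurj i))
  have hιL := fun i => (ι i).exists_leftInverse_of_injective
    (LinearMap.ker_eq_bot.2 (hιinj i))
  choose πinv hπinv using hπR
  choose ιinv hιinv using hιL
  intro y
  obtain ⟨f, hf⟩ := hMd (fun a =>
    LinearMap.toMatrix' (πinv (t a) ∘ₗ (y a).mulVecLin ∘ₗ ιinv (s a)))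
  refine ⟨fun i => LinearMap.toMatrix' (π i ∘ₗ (f i).mulVecLin ∘ₗ ι i), ?_⟩
  funext a
  apply Matrix.toLin'.injective
  show Matrix.toLin' (LinearMap.toMatrix' (CL a) * LinearMap.toMatrix'
      (π (s a) ∘ₗ (f (s a)).mulVecLin ∘ₗ ι (s a))
    - LinearMap.toMatrix' (π (t a) ∘ₗ (f (t a)).mulVecLin ∘ₗ ι (t a)) *
        LinearMap.toMatrix' (AL a)) = Matrix.toLin' (y a)
  rw [map_sub, Matrix.toLin'_mul, Matrix.toLin'_mul, Matrix.toLin'_toMatrix',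
    Matrix.toLin'_toMatrix', Matrix.toLin'_toMatrix', Matrix.toLin'_toMatrix']
  refine LinearMap.ext fun u => ?_
  simp only [LinearMap.sub_apply, LinearMap.comp_apply]
  have h1 := LinearMap.congr_fun (hKC a) ((f (s a)).mulVecLin (ι (s a) u))
  simp only [LinearMap.comp_apply] at h1
  have h2 := LinearMap.congr_fun (hKA a) u
  simp only [LinearMap.comp_apply] at h2
  rw [h1, h2]
  have hfa := congrFun hf a
  simp only [PhiFun] at hfa
  have h3 : ∀ x0, (Md a).mulVecLin ((f (s a)).mulVecLin x0)
      - (f (t a)).mulVecLin ((Md a).mulVecLin x0)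
      = (πinv (t a) ∘ₗ (y a).mulVecLin ∘ₗ ιinv (s a)) x0 := by
    intro x0
    have h4 := congrArg (fun K => K.mulVecLin x0) hfa
    simp only [Matrix.mulVecLin_apply, Matrix.sub_mulVec, ← Matrix.mulVec_mulVec] at h4
    have h5 : (LinearMap.toMatrix' (πinv (t a) ∘ₗ (y a).mulVecLin ∘ₗ ιinv (s a))).mulVec x0
        = (πinv (t a) ∘ₗ (y a).mulVecLin ∘ₗ ιinv (s a)) x0 := by
      rw [← Matrix.toLin'_apply, Matrix.toLin'_toMatrix']
    rw [h5] at h4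
    simpa [Matrix.mulVecLin_apply] using h4
  have h6 : π (t a) ((Md a).mulVecLin ((f (s a)).mulVecLin (ι (s a) u)))
      - π (t a) ((f (t a)).mulVecLin ((Md a).mulVecLin (ι (s a) u)))
      = π (t a) ((πinv (t a) ∘ₗ (y a).mulVecLin ∘ₗ ιinv (s a)) (ι (s a) u)) := by
    rw [← map_sub, h3]
  rw [h6]
  have h7 := LinearMap.congr_fun (hπinv (t a)) ((y a).mulVecLin (ιinv (s a) (ι (s a) u)))
  simp only [LinearMap.comp_apply, LinearMap.id_apply] at h7
  have h8 := LinearMap.congr_fun (hιinv (s a)) u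
  simp only [LinearMap.comp_apply, LinearMap.id_apply] at h8
  simp only [LinearMap.comp_apply]
  rw [h7, h8]
  rfl

/-- Forward direction: a subrepresentation of the rigid `Md` forces `Ext¹(Me, Mde) = 0`. -/
theorem forward_dir (hle : ∀ i, e i ≤ d i) {Md : QRep s t d} {Me : QRep s t e}
    {Mde : QRep s t fun i => d i - e i} (hMd : Rigid s t Md) (hMe : Rigid s t Me)
    (hMde : Rigid s t Mde) (hS : Nonempty (SubRep s t Md e)) :
    Function.Surjective (PhiFun s t Me Mde) := by
  classical
  obtain ⟨Am, Cm, hAC⟩ := forward_AC s t hle hMd hS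
  obtain ⟨Z, hZfin, hZ0, hZ⟩ := poly_surj s t Am Me Cm Mde hAC
  set ℓe : ℂ → QRep s t e := fun z => fun a => Am a + z • (Me a - Am a) with hℓe
  set ℓde : ℂ → QRep s t (fun i => d i - e i) :=
    fun z => fun a => Cm a + z • (Mde a - Cm a) with hℓde
  have hconte : Continuous ℓe :=
    continuous_pi fun a => continuous_const.add (continuous_id.smul continuous_const)
  have hcontde : Continuous ℓde :=
    continuous_pi fun a => continuous_const.add (continuous_id.smul continuous_const)
  have hle1 : ℓe 1 = Me := by funext a; simp [hℓe]
  have hlde1 : ℓde 1 = Mde := by funext a; simp [hℓde]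
  have hm1 : ℓe ⁻¹' {X | IsoRep s t X Me} ∈ nhds (1:ℂ) := by
    refine hconte.continuousAt.preimage_mem_nhds ?_
    rw [hle1]
    exact orb1 s t hMe
  have hm2 : ℓde ⁻¹' {X | IsoRep s t X Mde} ∈ nhds (1:ℂ) := by
    refine hcontde.continuousAt.preimage_mem_nhds ?_
    rw [hlde1]
    exact orb1 s t hMde
  obtain ⟨z, hzU, hzZ⟩ := exists_near_one_notin hZfin (Filter.inter_mem hm1 hm2)
  exact surj_transfer s t hzU.1 hzU.2 (hZ z hzZ)

end Assemble


theorem subRep_rigid_nonempty_iff [Fintype V] [Fintype A] (s t : A → V)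
    (hQ : IsDynkin s t) (d e : V → ℕ) (hle : ∀ i, e i ≤ d i)
    (Md : QRep s t d) (Me : QRep s t e) (Mde : QRep s t (fun i => d i - e i))
    (hMd : Rigid s t Md) (hMe : Rigid s t Me) (hMde : Rigid s t Mde) :
    Nonempty (SubRep s t Md e) ↔ ExtVanish s t Me Mde := by
  constructor
  · intro hS
    exact forward_dir s t hle hMd hMe hMde hS
  · intro hext
    exact backward_dir s t hle hMd hext

end
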